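/- Let R be a G-graded ring, P a graded weakly 2-absorbing ideal of R, and K a graded ideal of R with K ⊆ P. Then P/K is a graded weakly 2-absorbing ideal of the quotient graded ring R/K. -/

import Mathlib

variable {G R : Type*} [AddGroup G] [DecidableEq G] [Ring R]

/-- `x` is a homogeneous element of the `G`-graded ring `R`. -/
def IsHomog (𝒜 : G → AddSubgroup R) (x : R) : Prop := ∃ g, x ∈ 𝒜 g

/-- A two-sided ideal is graded if it contains all homogeneous components of its elements. -/
def IsGradedIdeal (𝒜 : G → AddSubgroup R) [GradedRing 𝒜] (P : TwoSidedIdeal R) : Prop :=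
  ∀ a ∈ P, ∀ g : G, (DirectSum.decompose 𝒜 a g : R) ∈ P

/-- Graded weakly prime: a proper graded ideal `P` such that `0 ≠ IJ ⊆ P` for graded
ideals `I, J` implies `I ⊆ P` or `J ⊆ P`. -/
def IsGradedWeaklyPrime (𝒜 : G → AddSubgroup R) [GradedRing 𝒜] (P : TwoSidedIdeal R) : Prop :=
  P ≠ ⊤ ∧ IsGradedIdeal 𝒜 P ∧
    ∀ I J : TwoSidedIdeal R, IsGradedIdeal 𝒜 I → IsGradedIdeal 𝒜 J →
      (∃ a ∈ I, ∃ b ∈ J, a * b ≠ 0) → (∀ a ∈ I, ∀ b ∈ J, a * b ∈ P) →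
      I ≤ P ∨ J ≤ P

/-- Graded weakly 2-absorbing: a proper graded ideal `P` such that for homogeneous `x, y, z`,
`0 ≠ xRyRz ⊆ P` implies `xy ∈ P` or `yz ∈ P` or `xz ∈ P`. -/
def IsGradedWeakly2Absorbing (𝒜 : G → AddSubgroup R) [GradedRing 𝒜] (P : TwoSidedIdeal R) : Prop :=
  P ≠ ⊤ ∧ IsGradedIdeal 𝒜 P ∧
    ∀ x y z : R, IsHomog 𝒜 x → IsHomog 𝒜 y → IsHomog 𝒜 z →
      (∃ r s : R, x * r * y * s * z ≠ 0) → (∀ r s : R, x * r * y * s * z ∈ P) →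
      x * y ∈ P ∨ y * z ∈ P ∨ x * z ∈ P

lemma decompose_mk (𝒜 : G → AddSubgroup R) [GradedRing 𝒜] (K : TwoSidedIdeal R)
    (ℬ : G → AddSubgroup K.ringCon.Quotient)
    (hℬ : ∀ g, ℬ g = (𝒜 g).map (RingCon.mk' K.ringCon).toAddMonoidHom)
    [GradedRing ℬ] (r : R) (g : G) :
    (DirectSum.decompose ℬ (RingCon.mk' K.ringCon r) g : K.ringCon.Quotient)
      = RingCon.mk' K.ringCon (DirectSum.decompose 𝒜 r g : R) := by
  induction r using DirectSum.Decomposition.inductionOn 𝒜 with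
  | zero => simp
  | @homogeneous i m =>
    have hm : (RingCon.mk' K.ringCon) (m : R) ∈ ℬ i := by
      rw [hℬ]; exact ⟨m, m.2, rfl⟩
    by_cases hig : i = g
    · subst hig
      rw [DirectSum.decompose_of_mem_same ℬ hm, DirectSum.decompose_of_mem_same 𝒜 m.2]
    · rw [DirectSum.decompose_of_mem_ne ℬ hm hig, DirectSum.decompose_of_mem_ne 𝒜 m.2 hig]
      simp
  | add x y hx hy =>
    rw [map_add, DirectSum.decompose_add, DirectSum.decompose_add]
    rw [DirectSum.add_apply, DirectSum.add_apply, AddSubgroup.coe_add, AddSubgroup.coe_add,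
      hx, hy, map_add]

/-- If `P` is a graded weakly 2-absorbing ideal of `R` and `K` is a graded ideal with
`K ⊆ P`, then `P/K` is a graded weakly 2-absorbing ideal of the quotient graded ring `R/K`,
where `R/K` is graded by `(R/K)_g = (R_g + K)/K` (the image of `R_g`). -/
theorem stmt5 (𝒜 : G → AddSubgroup R) [GradedRing 𝒜] (P K : TwoSidedIdeal R)
    (hP : IsGradedWeakly2Absorbing 𝒜 P) (hKgr : IsGradedIdeal 𝒜 K) (hKP : K ≤ P)
    (ℬ : G → AddSubgroup K.ringCon.Quotient)
    (hℬ : ∀ g, ℬ g = (𝒜 g).map (RingCon.mk' K.ringCon).toAddMonoidHom)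
    [GradedRing ℬ]
    (Q : TwoSidedIdeal K.ringCon.Quotient)
    (hQ : ∀ q, q ∈ Q ↔ ∃ p ∈ P, RingCon.mk' K.ringCon p = q) :
    IsGradedWeakly2Absorbing ℬ Q := by
  have hsurj : Function.Surjective (RingCon.mk' K.ringCon) := Quotient.mk''_surjective
  have hPQ : ∀ p ∈ P, RingCon.mk' K.ringCon p ∈ Q := fun p hp => (hQ _).2 ⟨p, hp, rfl⟩
  have hQP : ∀ r : R, RingCon.mk' K.ringCon r ∈ Q → r ∈ P := by
    intro r hr
    obtain ⟨p, hp, hpe⟩ := (hQ _).1 hr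
    have : p - r ∈ K := (TwoSidedIdeal.rel_iff K p r).1 ((RingCon.eq K.ringCon).mp hpe)
    have h2 : p - r ∈ P := hKP this
    simpa using P.sub_mem hp h2
  refine ⟨?_, ?_, ?_⟩
  · intro h
    apply hP.1
    rw [eq_top_iff]
    intro a _
    have h1 : (1 : R) ∈ P := hQP 1 (h ▸ trivial)
    simpa using P.mul_mem_left a 1 h1
  · intro a ha g
    obtain ⟨p, hp, rfl⟩ := (hQ a).1 ha
    rw [decompose_mk 𝒜 K ℬ hℬ]
    exact hPQ _ (hP.2.1 p hp g)
  · intro x y z hx hy hz hne hall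
    obtain ⟨gx, hxg⟩ := hx
    rw [hℬ] at hxg
    obtain ⟨x', hx', rfl⟩ := hxg
    obtain ⟨gy, hyg⟩ := hy
    rw [hℬ] at hyg
    obtain ⟨y', hy', rfl⟩ := hyg
    obtain ⟨gz, hzg⟩ := hz
    rw [hℬ] at hzg
    obtain ⟨z', hz', rfl⟩ := hzg
    have hmk : ∀ r s : R,
        RingCon.mk' K.ringCon (x' * r * y' * s * z') =
          (RingCon.mk' K.ringCon).toAddMonoidHom x' * RingCon.mk' K.ringCon r *
            (RingCon.mk' K.ringCon).toAddMonoidHom y' * RingCon.mk' K.ringCon s *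
            (RingCon.mk' K.ringCon).toAddMonoidHom z' := by
      intro r s; simp [map_mul]
    have hne' : ∃ r s : R, x' * r * y' * s * z' ≠ 0 := by
      obtain ⟨r, s, hrs⟩ := hne
      obtain ⟨r', rfl⟩ := hsurj r
      obtain ⟨s', rfl⟩ := hsurj s
      exact ⟨r', s', fun h => hrs (by rw [← hmk, h, map_zero])⟩
    have hall' : ∀ r s : R, x' * r * y' * s * z' ∈ P := by
      intro r s
      apply hQP
      rw [hmk]
      exact hall _ _
    rcases hP.2.2 x' y' z' ⟨gx, hx'⟩ ⟨gy, hy'⟩ ⟨gz, hz'⟩ hne' hall' with h | h | h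
    · exact Or.inl (by simpa [map_mul] using hPQ _ h)
    · exact Or.inr (Or.inl (by simpa [map_mul] using hPQ _ h))
    · exact Or.inr (Or.inr (by simpa [map_mul] using hPQ _ h))
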